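/- (Difference-type reverse of Young's inequality, scalar form) For positive real numbers a, b and λ ∈ [0,1], we have a^{1-λ} b^{λ} ≤ (1-λ)a + λb ≤ a^{1-λ} b^{λ} + λ(1-λ)(log(a/b))² · d₂, where d₂ = max{a, b}. -/

import Mathlib

open Real

lemma lemA (t : ℝ) (ht : t ≤ 0) : Real.exp t ≤ 1 + t + t^2/2 := by
  have h : AntitoneOn (fun t : ℝ => 1 + t + t^2/2 - Real.exp t) (Set.Iic 0) := by
    apply antitoneOn_of_deriv_nonpos (convex_Iic 0)
    · fun_prop
    · intro x hx
      exact ((differentiable_const 1).add differentiable_id |>.add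
        ((differentiable_pow 2).div_const 2) |>.sub Real.differentiable_exp).differentiableAt.differentiableWithinAt
    · intro x hx
      have hd : HasDerivAt (fun t : ℝ => 1 + t + t^2/2 - Real.exp t) (0 + 1 + (2*x^1)/2 - Real.exp x) x := by
        exact (((hasDerivAt_const x (1:ℝ)).add (hasDerivAt_id x)).add ((hasDerivAt_pow 2 x).div_const 2)).sub (Real.hasDerivAt_exp x)
      rw [hd.deriv]
      have := Real.add_one_le_exp x
      simp only [pow_one]
      linarith
  have h0 : (fun t : ℝ => 1 + t + t^2/2 - Real.exp t) 0 ≤ (fun t : ℝ => 1 + t + t^2/2 - Real.exp t) t :=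
    h (Set.mem_Iic.2 ht) (Set.mem_Iic.2 le_rfl) ht
  simp [Real.exp_zero] at h0
  linarith

lemma lemB (t : ℝ) (ht : 0 ≤ t) : Real.exp t ≤ 1 + t + t^2/2 * Real.exp t := by
  have h : MonotoneOn (fun t : ℝ => 1 + t + t^2/2 * Real.exp t - Real.exp t) (Set.Ici 0) := by
    apply monotoneOn_of_deriv_nonneg (convex_Ici 0)
    · fun_prop
    · intro x hx
      exact (((differentiable_const 1).add differentiable_id).add
        (((differentiable_pow 2).div_const 2).mul Real.differentiable_exp) |>.sub Real.differentiable_exp).differentiableAt.differentiableWithinAt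
    · intro x hx
      have hd : HasDerivAt (fun t : ℝ => 1 + t + t^2/2 * Real.exp t - Real.exp t)
          (0 + 1 + ((2*x^1)/2 * Real.exp x + x^2/2 * Real.exp x) - Real.exp x) x := by
        exact (((hasDerivAt_const x (1:ℝ)).add (hasDerivAt_id x)).add
          (((hasDerivAt_pow 2 x).div_const 2).mul (Real.hasDerivAt_exp x))).sub (Real.hasDerivAt_exp x)
      rw [hd.deriv]
      simp only [pow_one]
      have hx0 : (0:ℝ) ≤ x := le_of_lt (by simpa using hx)
      have hexp : (0:ℝ) < Real.exp x := Real.exp_pos x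
      by_cases hc : 1 ≤ x + x^2/2
      · nlinarith
      · push_neg at hc
        have hx1 : x < 1 := by nlinarith
        have h2 : 1 - x ≤ Real.exp (-x) := by have := Real.add_one_le_exp (-x); linarith
        have h3 : (1 - x) * Real.exp x ≤ 1 := by
          have := mul_le_mul_of_nonneg_right h2 hexp.le
          rwa [← Real.exp_add, neg_add_cancel, Real.exp_zero] at this
        nlinarith
  have h0 := h (Set.mem_Ici.2 le_rfl) (Set.mem_Ici.2 ht) ht
  simp [Real.exp_zero] at h0
  linarith

lemma key (u : ℝ) : Real.exp u - 1 - u ≤ u^2 * max 1 (Real.exp u) / 2 := by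
  rcases le_or_gt u 0 with h | h
  · have h1 := lemA u h
    have h2 : max 1 (Real.exp u) = 1 := max_eq_left (by simpa using Real.exp_le_exp.2 h)
    rw [h2]; linarith
  · have h1 := lemB u h.le
    have h2 : max 1 (Real.exp u) = Real.exp u := max_eq_right (by simpa using Real.exp_le_exp.2 h.le)
    rw [h2]; linarith

lemma core (u lam : ℝ) (h0 : 0 ≤ lam) (h1 : lam ≤ 1) :
    (1 - lam) + lam * Real.exp u - Real.exp (lam * u) ≤
      lam * (1 - lam) * u^2 * max 1 (Real.exp u) := by
  have hM1 : (1:ℝ) ≤ max 1 (Real.exp u) := le_max_left _ _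
  have hMe : Real.exp u ≤ max 1 (Real.exp u) := le_max_right _ _
  rcases le_or_gt lam (1/2) with hc | hc
  · -- lam ≤ 1/2
    have hlow : 1 + lam * u ≤ Real.exp (lam * u) := by
      have := Real.add_one_le_exp (lam * u); linarith
    have hk := key u
    -- LHS ≤ lam * (exp u - 1 - u) ≤ lam * u² M / 2 ≤ lam(1-lam)u² M
    nlinarith [sq_nonneg u, mul_nonneg h0 (mul_nonneg (sq_nonneg u) (le_trans zero_le_one hM1))]
  · -- lam > 1/2
    have hlow : Real.exp u * (1 + (lam - 1) * u) ≤ Real.exp (lam * u) := by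
      have h2 : 1 + (lam - 1) * u ≤ Real.exp ((lam - 1) * u) := by
        have := Real.add_one_le_exp ((lam - 1) * u); linarith
      calc Real.exp u * (1 + (lam - 1) * u) ≤ Real.exp u * Real.exp ((lam - 1) * u) := by
            exact mul_le_mul_of_nonneg_left h2 (Real.exp_pos u).le
        _ = Real.exp (lam * u) := by rw [← Real.exp_add]; ring_nf
    have hk := key (-u)
    have hmul : Real.exp u * (Real.exp (-u) - 1 - (-u)) ≤
        Real.exp u * ((-u)^2 * max 1 (Real.exp (-u)) / 2) :=
      mul_le_mul_of_nonneg_left hk (Real.exp_pos u).le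
    have he : Real.exp u * Real.exp (-u) = 1 := by
      rw [← Real.exp_add]; simp
    have hmax : Real.exp u * max 1 (Real.exp (-u)) = max (Real.exp u) 1 := by
      rw [mul_max_of_nonneg _ _ (Real.exp_pos u).le, he, mul_one]
    have hmax2 : max (Real.exp u) 1 = max 1 (Real.exp u) := max_comm _ _
    -- so 1 - exp u + u * exp u ≤ u² * M / 2
    have h3 : 1 - Real.exp u + u * Real.exp u ≤ u^2 * max 1 (Real.exp u) / 2 := by
      have : Real.exp u * (Real.exp (-u) - 1 + u) = 1 - Real.exp u + u * Real.exp u := by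
        rw [mul_sub, mul_add] at *
        nlinarith [he]
      nlinarith [hmul, hmax, hmax2]
    have h4 : (1 - lam) * (1 - Real.exp u + u * Real.exp u) ≤
        (1 - lam) * (u^2 * max 1 (Real.exp u) / 2) :=
      mul_le_mul_of_nonneg_left h3 (by linarith)
    have h5 : 0 ≤ (1 - lam) * (u^2 * max 1 (Real.exp u)) * (lam - 1/2) :=
      mul_nonneg (mul_nonneg (by linarith) (mul_nonneg (sq_nonneg u) (by linarith))) (by linarith)
    nlinarith [hlow]

/-- **Difference-type reverse of Young's inequality (scalar form).** For positive reals `a, b`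
and `λ ∈ [0,1]`: `a^(1-λ) b^λ ≤ (1-λ)a + λb ≤ a^(1-λ) b^λ + λ(1-λ)(log(a/b))² · d₂`,
where `d₂ = max a b`. -/
theorem stmt_3 (a b lam : ℝ) (ha : 0 < a) (hb : 0 < b) (hlam : lam ∈ Set.Icc (0 : ℝ) 1) :
    a ^ (1 - lam) * b ^ lam ≤ (1 - lam) * a + lam * b ∧
      (1 - lam) * a + lam * b ≤
        a ^ (1 - lam) * b ^ lam + lam * (1 - lam) * (Real.log (a / b)) ^ 2 * max a b := by
  obtain ⟨h0, h1⟩ := hlam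
  set t : ℝ := Real.log b - Real.log a with ht
  have hexp : Real.exp t = b / a := by
    rw [ht, Real.exp_sub, Real.exp_log hb, Real.exp_log ha]
  have hbeq : b = a * Real.exp t := by
    rw [hexp]; field_simp
  have hrw : a ^ (1 - lam) * b ^ lam = a * Real.exp (lam * t) := by
    rw [Real.rpow_def_of_pos ha, Real.rpow_def_of_pos hb, ← Real.exp_add]
    have h2 : a * Real.exp (lam * t) = Real.exp (Real.log a + lam * t) := by
      rw [Real.exp_add, Real.exp_log ha]
    rw [h2]
    congr 1
    rw [ht]; ring
  have hlog : Real.log (a / b) ^ 2 = t ^ 2 := by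
    rw [Real.log_div ha.ne' hb.ne']
    rw [ht]; ring
  have hmax : max a b = a * max 1 (Real.exp t) := by
    rw [hbeq, mul_max_of_nonneg _ _ ha.le, mul_one]
  constructor
  · exact Real.geom_mean_le_arith_mean2_weighted (by linarith) h0 ha.le hb.le (by ring)
  · have hc := core t lam h0 h1
    have := mul_le_mul_of_nonneg_left hc ha.le
    rw [hrw, hlog, hmax, hbeq]
    nlinarith [this]
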